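/- Let X and Y be geometric data sets and π ∈ Π(μ_X, μ_Y) a coupling. Then dis π = □_π(Lip₁(X), Lip₁(Y)), where Lip₁(X) and Lip₁(Y) are the sets of all 1-Lipschitz real-valued functions on (X, d_X) and (Y, d_Y) respectively. Consequently, the box distance between geometric data sets extends Gromov's box distance between mm-spaces. -/
import Mathlib


open MeasureTheory Topology Filter ENNReal

noncomputable section

/-- The Ky Fan (extended) pseudometric between two maps, w.r.t. a measure `π`:
`inf {ε ≥ 0 | π {ω | d (u ω) (v ω) > ε} ≤ ε}`. -/
def kyFan {Ω E : Type*} [MeasurableSpace Ω] [PseudoEMetricSpace E]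
    (π : Measure Ω) (u v : Ω → E) : ℝ≥0∞ :=
  sInf {ε : ℝ≥0∞ | π {ω | ε < edist (u ω) (v ω)} ≤ ε}

/-- Hausdorff distance between two sets w.r.t. an abstract extended pseudometric `d`. -/
def hausd {α : Type*} (d : α → α → ℝ≥0∞) (A B : Set α) : ℝ≥0∞ :=
  max (⨆ a : A, ⨅ b : B, d a b) (⨆ b : B, ⨅ a : A, d a b)

/-- The sup (extended) pseudometric `d∞^A` over a subset `A`. -/
def dInfty {α β : Type*} [PseudoEMetricSpace β] (A : Set α) (u v : α → β) : ℝ≥0∞ :=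
  ⨆ a : A, edist (u a) (v a)

/-- A geometric data set: a complete separable metric space whose distance is the
supremum of feature differences over a nonempty family `F` of real-valued functions,
equipped with a fully supported Borel probability measure. -/
structure GDS where
  carrier : Type
  met : MetricSpace carrier
  cms : CompleteSpace carrier
  sep : TopologicalSpace.SeparableSpace carrier
  msp : MeasurableSpace carrier
  bor : BorelSpace carrier
  F : Set (carrier → ℝ)
  F_nonempty : F.Nonempty
  dist_isLUB : ∀ x y : carrier, IsLUB ((fun f => |f x - f y|) '' F) (dist x y)
  μ : Measure carrier
  prob : IsProbabilityMeasure μ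
  full_support : ∀ U : Set carrier, IsOpen U → U.Nonempty → 0 < μ U

attribute [instance] GDS.met GDS.cms GDS.sep GDS.msp GDS.bor GDS.prob

/-- A coupling of the measures of two geometric data sets. -/
def GDS.Coupling (X Y : GDS) (π : Measure (X.carrier × Y.carrier)) : Prop :=
  IsProbabilityMeasure π ∧ π.map Prod.fst = X.μ ∧ π.map Prod.snd = Y.μ

/-- A parameter of a measure `μ`: a Borel measurable map from `[0,1]` (with Lebesgue
measure) pushing the Lebesgue measure forward to `μ`. -/
def IsParam {X : Type*} [MeasurableSpace X] (μ : Measure X)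
    (φ : Set.Icc (0:ℝ) 1 → X) : Prop :=
  Measurable φ ∧ Measure.map φ volume = μ

/-- The observable distance between two geometric data sets. -/
def dConc (X Y : GDS) : ℝ≥0∞ :=
  ⨅ (φ : Set.Icc (0:ℝ) 1 → X.carrier) (_ : IsParam X.μ φ)
    (ψ : Set.Icc (0:ℝ) 1 → Y.carrier) (_ : IsParam Y.μ ψ),
    hausd (kyFan (volume : Measure (Set.Icc (0:ℝ) 1)))
      ((· ∘ φ) '' X.F) ((· ∘ ψ) '' Y.F)

/-- `d_conc^π`, the Hausdorff distance w.r.t. the Ky Fan metric of a coupling `π`. -/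
def dConcCoupling (X Y : GDS) (π : Measure (X.carrier × Y.carrier)) : ℝ≥0∞ :=
  hausd (kyFan π) ((· ∘ Prod.fst) '' X.F) ((· ∘ Prod.snd) '' Y.F)

/-- The Prohorov distance between two Borel measures. -/
def prohorov {Z : Type*} [PseudoEMetricSpace Z] [MeasurableSpace Z]
    (μ ν : Measure Z) : ℝ≥0∞ :=
  sInf {ε : ℝ≥0∞ | ∀ A : Set Z, MeasurableSet A →
    ν A ≤ μ {z | EMetric.infEdist z A < ε} + ε}

/-- The `a`-partial diameter of a Borel measure on `ℝ`. -/
def partialDiam (ν : Measure ℝ) (a : ℝ≥0∞) : ℝ≥0∞ :=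
  ⨅ (I : Set ℝ) (_ : MeasurableSet I) (_ : a ≤ ν I), EMetric.diam I

/-- The `κ`-observable diameter `ObsDiam(X; -κ)` of a geometric data set. -/
def obsDiam (X : GDS) (κ : ℝ) : ℝ≥0∞ :=
  ⨆ f : X.F, partialDiam (X.μ.map f) (ENNReal.ofReal (1 - κ))

/-- The distortion of a subset `S ⊆ X × Y`. -/
def distortion {X Y : Type*} [PseudoMetricSpace X] [PseudoMetricSpace Y]
    (S : Set (X × Y)) : ℝ≥0∞ :=
  ⨆ (p : S) (q : S), edist (dist p.1.1 q.1.1) (dist p.1.2 q.1.2)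

/-- `□_π^S(F, G) = max {1 - π S, 2 H_{d∞^S}(F ∘ pr₁, G ∘ pr₂)}`. -/
def boxS (X Y : GDS) (π : Measure (X.carrier × Y.carrier))
    (S : Set (X.carrier × Y.carrier))
    (F : Set (X.carrier → ℝ)) (G : Set (Y.carrier → ℝ)) : ℝ≥0∞ :=
  max (1 - π S) (2 * hausd (dInfty S) ((· ∘ Prod.fst) '' F) ((· ∘ Prod.snd) '' G))

/-- `□_π(F, G)`, infimum of `□_π^S(F, G)` over closed `S`. -/
def boxCoupling (X Y : GDS) (π : Measure (X.carrier × Y.carrier))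
    (F : Set (X.carrier → ℝ)) (G : Set (Y.carrier → ℝ)) : ℝ≥0∞ :=
  ⨅ (S : Set (X.carrier × Y.carrier)) (_ : IsClosed S), boxS X Y π S F G

/-- The box distance between two geometric data sets. -/
def boxDist (X Y : GDS) : ℝ≥0∞ :=
  ⨅ (π : Measure (X.carrier × Y.carrier)) (_ : X.Coupling Y π),
    boxCoupling X Y π X.F Y.F

/-- The distortion `dis π` of a coupling `π`. -/
def disCoupling (X Y : GDS) (π : Measure (X.carrier × Y.carrier)) : ℝ≥0∞ :=
  ⨅ (S : Set (X.carrier × Y.carrier)) (_ : IsClosed S), max (1 - π S) (distortion S)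

/-- `X ⪯ Y` : the geometric data set `Y` dominates `X` (feature order). -/
def GDS.Dominates (Y X : GDS) : Prop :=
  ∃ p : Y.carrier → X.carrier, Measurable p ∧ Y.μ.map p = X.μ ∧
    (· ∘ p) '' X.F ⊆ closure Y.F


lemma key_extend {X Y : Type*} [PseudoMetricSpace X] [PseudoMetricSpace Y]
    (S : Set (X × Y)) (hS : S.Nonempty) (r : ℝ)
    (hdis : ∀ p ∈ S, ∀ q ∈ S, dist p.1 q.1 ≤ dist p.2 q.2 + r)
    (f : X → ℝ) (hf : LipschitzWith 1 f) :
    ∃ g : Y → ℝ, LipschitzWith 1 g ∧ ∀ p ∈ S, |f p.1 - g p.2| ≤ r / 2 := by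
  obtain ⟨s₀, hs₀⟩ := hS
  set T : Y → Set ℝ := fun y => (fun p : X × Y => f p.1 + dist y p.2 + r / 2) '' S with hT
  have hTne : ∀ y, (T y).Nonempty := fun y => ⟨_, ⟨s₀, hs₀, rfl⟩⟩
  have hflip : ∀ a b : X, f a - f b ≤ dist a b := by
    intro a b
    have := hf.dist_le_mul a b
    rw [Real.dist_eq, NNReal.coe_one, one_mul] at this
    exact sub_le_iff_le_add'.2 (by nlinarith [abs_le.1 this])
  have hTbdd : ∀ y, BddBelow (T y) := by
    intro y
    refine ⟨f s₀.1 - r - dist y s₀.2 + r / 2, ?_⟩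
    rintro _ ⟨⟨x', y'⟩, hp, rfl⟩
    have h1 : f s₀.1 - f x' ≤ dist s₀.1 x' := hflip _ _
    have h2 : dist s₀.1 x' ≤ dist s₀.2 y' + r := hdis _ hs₀ _ hp
    have h3 : dist s₀.2 y' ≤ dist s₀.2 y + dist y y' := dist_triangle _ _ _
    have h4 : dist y s₀.2 = dist s₀.2 y := dist_comm _ _
    simp only
    nlinarith
  refine ⟨fun y => sInf (T y), ?_, ?_⟩
  · refine LipschitzWith.of_dist_le_mul fun y z => ?_
    rw [NNReal.coe_one, one_mul, Real.dist_eq, abs_le]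
    have key : ∀ y z : Y, sInf (T y) ≤ sInf (T z) + dist y z := by
      intro y z
      rw [← sub_le_iff_le_add]
      refine le_csInf (hTne z) ?_
      rintro _ ⟨⟨x', y'⟩, hp, rfl⟩
      rw [sub_le_iff_le_add]
      calc sInf (T y) ≤ f x' + dist y y' + r / 2 := csInf_le (hTbdd y) ⟨(x', y'), hp, rfl⟩
        _ ≤ f x' + (dist y z + dist z y') + r / 2 := by
            have := dist_triangle y z y'; linarith
        _ = f x' + dist z y' + r / 2 + dist y z := by ring
    constructor
    · linarith [key z y, dist_comm y z]
    · linarith [key y z]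
  · intro p hp
    have hup : sInf (T p.2) ≤ f p.1 + dist p.2 p.2 + r / 2 := csInf_le (hTbdd _) ⟨p, hp, rfl⟩
    rw [dist_self] at hup
    have hlow : f p.1 - r / 2 ≤ sInf (T p.2) := by
      refine le_csInf (hTne _) ?_
      rintro _ ⟨⟨x', y'⟩, hq, rfl⟩
      have h1 : f p.1 - f x' ≤ dist p.1 x' := hflip _ _
      have h2 : dist p.1 x' ≤ dist p.2 y' + r := hdis _ hp _ hq
      linarith
    rw [abs_le]
    constructor <;> simp only <;> linarith

lemma half_bound {X Y : Type*} [PseudoMetricSpace X] [PseudoMetricSpace Y]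
    (S : Set (X × Y)) (c : ℝ)
    (h : ∀ f : X → ℝ, LipschitzWith 1 f → ∀ ε : ℝ, 0 < ε →
      ∃ g : Y → ℝ, LipschitzWith 1 g ∧ ∀ p ∈ S, |f p.1 - g p.2| ≤ c + ε) :
    ∀ p ∈ S, ∀ q ∈ S, dist p.1 q.1 ≤ dist p.2 q.2 + 2 * c := by
  intro p hp q hq
  refine _root_.le_of_forall_pos_le_add fun ε hε => ?_
  obtain ⟨g, hg, hgb⟩ := h (fun x => dist x q.1) (LipschitzWith.dist_left q.1)
    (ε / 2) (by linarith)
  have h1 := abs_le.1 (hgb p hp)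
  have h2 := abs_le.1 (hgb q hq)
  have h3 : |g p.2 - g q.2| ≤ dist p.2 q.2 := by
    have := hg.dist_le_mul p.2 q.2
    rwa [Real.dist_eq, NNReal.coe_one, one_mul] at this
  have h3' := abs_le.1 h3
  simp only [dist_self] at h1 h2 ⊢
  obtain ⟨h1a, h1b⟩ := h1; obtain ⟨h2a, h2b⟩ := h2; obtain ⟨h3a, h3b⟩ := h3'
  linarith

set_option maxHeartbeats 1000000 in
lemma distortion_eq_two_hausd {X Y : Type*} [PseudoMetricSpace X] [PseudoMetricSpace Y]
    (S : Set (X × Y)) :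
    distortion S = 2 * hausd (dInfty S)
      ((· ∘ Prod.fst) '' {f : X → ℝ | LipschitzWith 1 f})
      ((· ∘ Prod.snd) '' {g : Y → ℝ | LipschitzWith 1 g}) := by
  set A : Set (X × Y → ℝ) := (· ∘ Prod.fst) '' {f : X → ℝ | LipschitzWith 1 f} with hA
  set B : Set (X × Y → ℝ) := (· ∘ Prod.snd) '' {g : Y → ℝ | LipschitzWith 1 g} with hB
  have hAmem : ((fun _ => (0:ℝ)) : X × Y → ℝ) ∈ A :=
    ⟨fun _ => 0, fun x y => by simp, rfl⟩
  have hBmem : ((fun _ => (0:ℝ)) : X × Y → ℝ) ∈ B :=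
    ⟨fun _ => 0, fun x y => by simp, rfl⟩
  haveI hAne : Nonempty A := ⟨⟨_, hAmem⟩⟩
  haveI hBne : Nonempty B := ⟨⟨_, hBmem⟩⟩
  set H := hausd (dInfty S) A B with hH
  apply le_antisymm
  · -- distortion S ≤ 2 * H
    refine iSup_le fun p => iSup_le fun q => ?_
    rcases eq_or_ne H ⊤ with htop | htop
    · rw [htop]
      simp
    set c := H.toReal with hc
    have hc0 : 0 ≤ c := ENNReal.toReal_nonneg
    -- main approximation fact
    have hb1 : ∀ f : X → ℝ, LipschitzWith 1 f → ∀ ε : ℝ, 0 < ε →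
        ∃ g : Y → ℝ, LipschitzWith 1 g ∧ ∀ s ∈ S, |f s.1 - g s.2| ≤ c + ε := by
      intro f hf ε hε
      have h1 : (⨅ b : B, dInfty S (f ∘ Prod.fst) b) ≤ H := by
        refine le_trans ?_ (le_max_left _ _)
        exact le_iSup_of_le ⟨f ∘ Prod.fst, ⟨f, hf, rfl⟩⟩ le_rfl
      have h2 : (⨅ b : B, dInfty S (f ∘ Prod.fst) b) < H + ENNReal.ofReal ε :=
        lt_of_le_of_lt h1 (ENNReal.lt_add_right htop (ENNReal.ofReal_pos.2 hε).ne')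
      rw [iInf_lt_iff] at h2
      obtain ⟨⟨b, g, hg, rfl⟩, hlt⟩ := h2
      refine ⟨g, hg, fun s hs => ?_⟩
      have h3 : edist (f s.1) (g s.2) ≤ dInfty S (f ∘ Prod.fst) ((· ∘ Prod.snd) g) :=
        le_iSup_of_le (⟨s, hs⟩ : S) le_rfl
      have h4 : edist (f s.1) (g s.2) ≤ H + ENNReal.ofReal ε := h3.trans hlt.le
      rw [edist_dist, Real.dist_eq,
        ENNReal.ofReal_le_iff_le_toReal (by finiteness),
        ENNReal.toReal_add htop ENNReal.ofReal_ne_top,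
        ENNReal.toReal_ofReal hε.le] at h4
      exact h4
    have hb2 : ∀ g : Y → ℝ, LipschitzWith 1 g → ∀ ε : ℝ, 0 < ε →
        ∃ f : X → ℝ, LipschitzWith 1 f ∧ ∀ s ∈ S, |g s.2 - f s.1| ≤ c + ε := by
      intro g hg ε hε
      have h1 : (⨅ a : A, dInfty S a (g ∘ Prod.snd)) ≤ H := by
        refine le_trans ?_ (le_max_right _ _)
        exact le_iSup_of_le ⟨g ∘ Prod.snd, ⟨g, hg, rfl⟩⟩ le_rfl
      have h2 : (⨅ a : A, dInfty S a (g ∘ Prod.snd)) < H + ENNReal.ofReal ε :=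
        lt_of_le_of_lt h1 (ENNReal.lt_add_right htop (ENNReal.ofReal_pos.2 hε).ne')
      rw [iInf_lt_iff] at h2
      obtain ⟨⟨a, f, hf, rfl⟩, hlt⟩ := h2
      refine ⟨f, hf, fun s hs => ?_⟩
      have h3 : edist (f s.1) (g s.2) ≤ dInfty S ((· ∘ Prod.fst) f) (g ∘ Prod.snd) :=
        le_iSup_of_le (⟨s, hs⟩ : S) le_rfl
      have h4 : edist (f s.1) (g s.2) ≤ H + ENNReal.ofReal ε := h3.trans hlt.le
      rw [edist_dist, Real.dist_eq,
        ENNReal.ofReal_le_iff_le_toReal (by finiteness),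
        ENNReal.toReal_add htop ENNReal.ofReal_ne_top,
        ENNReal.toReal_ofReal hε.le] at h4
      rw [abs_sub_comm]
      exact h4
    have hXY : dist p.1.1 q.1.1 ≤ dist p.1.2 q.1.2 + 2 * c :=
      half_bound S c hb1 _ p.2 _ q.2
    have hYX : dist p.1.2 q.1.2 ≤ dist p.1.1 q.1.1 + 2 * c := by
      have := half_bound (Prod.swap '' S) c ?_ (Prod.swap p.1)
        (Set.mem_image_of_mem _ p.2) (Prod.swap q.1) (Set.mem_image_of_mem _ q.2)
      · exact this
      · intro g hg ε hε
        obtain ⟨f, hf, hb⟩ := hb2 g hg ε hε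
        exact ⟨f, hf, by rintro s ⟨t, ht, rfl⟩; exact hb t ht⟩
    rw [edist_dist, Real.dist_eq]
    calc ENNReal.ofReal |dist p.1.1 q.1.1 - dist p.1.2 q.1.2|
        ≤ ENNReal.ofReal (2 * c) := by
          refine ENNReal.ofReal_le_ofReal (abs_le.2 ⟨by linarith, by linarith⟩)
      _ = 2 * H := by
          rw [ENNReal.ofReal_mul (by norm_num), ENNReal.ofReal_ofNat,
            ENNReal.ofReal_toReal htop]
  · -- 2 * H ≤ distortion S
    rcases S.eq_empty_or_nonempty with rfl | hS
    · have : H = 0 := by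
        have hd : ∀ u v : X × Y → ℝ, dInfty (∅ : Set (X × Y)) u v = 0 := by
          intro u v
          simp [dInfty]
        simp [hH, hausd, hd, iInf_const]
      rw [this]
      simp
    rcases eq_or_ne (distortion S) ⊤ with htop | htop
    · rw [htop]; exact le_top
    set r := (distortion S).toReal with hr
    have hr0 : 0 ≤ r := ENNReal.toReal_nonneg
    have hdis : ∀ p ∈ S, ∀ q ∈ S,
        edist (dist p.1 q.1) (dist p.2 q.2) ≤ distortion S := by
      intro p hp q hq
      exact le_iSup₂ (f := fun (p : S) (q : S) =>
        edist (dist p.1.1 q.1.1) (dist p.1.2 q.1.2)) ⟨p, hp⟩ ⟨q, hq⟩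
    have habs : ∀ p ∈ S, ∀ q ∈ S, |dist p.1 q.1 - dist p.2 q.2| ≤ r := by
      intro p hp q hq
      have := hdis p hp q hq
      rwa [edist_dist, Real.dist_eq, ENNReal.ofReal_le_iff_le_toReal htop] at this
    have hd1 : ∀ p ∈ S, ∀ q ∈ S, dist p.1 q.1 ≤ dist p.2 q.2 + r := by
      intro p hp q hq; linarith [abs_le.1 (habs p hp q hq)]
    have hd2 : ∀ p ∈ Prod.swap '' S, ∀ q ∈ Prod.swap '' S,
        dist p.1 q.1 ≤ dist p.2 q.2 + r := by
      rintro _ ⟨p, hp, rfl⟩ _ ⟨q, hq, rfl⟩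
      simp only [Prod.fst_swap, Prod.snd_swap]
      linarith [abs_le.1 (habs p hp q hq)]
    have hHle : H ≤ ENNReal.ofReal (r / 2) := by
      rw [hH, hausd]
      refine max_le (iSup_le fun a => ?_) (iSup_le fun b => ?_)
      · obtain ⟨f, hf, hfa⟩ := a.2
        obtain ⟨g, hg, hgb⟩ := key_extend S hS r hd1 f hf
        refine le_trans (iInf_le _ (⟨(· ∘ Prod.snd) g, ⟨g, hg, rfl⟩⟩ : B)) ?_
        refine iSup_le fun s => ?_
        rw [← hfa]
        rw [edist_dist, Real.dist_eq]
        exact ENNReal.ofReal_le_ofReal (hgb s.1 s.2)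
      · obtain ⟨g, hg, hgb⟩ := b.2
        obtain ⟨f, hf, hfb⟩ := key_extend (Prod.swap '' S) ⟨_, Set.mem_image_of_mem _ hS.choose_spec⟩
          r hd2 g hg
        refine le_trans (iInf_le _ (⟨(· ∘ Prod.fst) f, ⟨f, hf, rfl⟩⟩ : A)) ?_
        refine iSup_le fun s => ?_
        rw [← hgb]
        rw [edist_dist, Real.dist_eq]
        have := hfb (Prod.swap s.1) (Set.mem_image_of_mem _ s.2)
        simp only [Prod.fst_swap, Prod.snd_swap] at this
        rw [abs_sub_comm] at this
        exact ENNReal.ofReal_le_ofReal this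
    calc 2 * H ≤ 2 * ENNReal.ofReal (r / 2) := by gcongr
      _ = ENNReal.ofReal r := by
          rw [show (2:ℝ≥0∞) = ENNReal.ofReal 2 from (ENNReal.ofReal_ofNat 2).symm,
            ← ENNReal.ofReal_mul (by norm_num)]
          rw [show 2 * (r / 2) = r by ring]
      _ = distortion S := ENNReal.ofReal_toReal htop


/-- For a coupling `π` of two geometric data sets,
`dis π = □_π(Lip₁(X), Lip₁(Y))`. -/
theorem disCoupling_eq_boxCoupling_lip (X Y : GDS)
    (π : Measure (X.carrier × Y.carrier)) (hπ : X.Coupling Y π) :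
    disCoupling X Y π = boxCoupling X Y π
      {f : X.carrier → ℝ | LipschitzWith 1 f}
      {g : Y.carrier → ℝ | LipschitzWith 1 g} := by
  simp only [disCoupling, boxCoupling, boxS]
  exact iInf_congr fun S => iInf_congr fun _ => by rw [distortion_eq_two_hausd]
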